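/- Let Ω be a compact subset of [0,∞)^I containing 0, and let V be a continuous permutation invariant function on the union over J' ≤ J of Ω^{J'} satisfying the padding condition V(x₁,…,x_{J'}, 0,…,0) = V(x₁,…,x_{J'}) for any number of appended zero vectors (up to total length J). Then there exists a continuous function ψ : ℝ^{κ(I,J)} → ℝ such that V({x_j}_{j∈𝒥}) = ψ(∑_{k∈𝒥} η_{I,J}(x_k)) for all |𝒥| ≤ J, where η_{I,J} is the multisymmetric power sum map of degree up to J and κ(I,J) = binom(J+I,I) − 1. -/

import Mathlib

open Finset


lemma aeval_psum {n : ℕ} (a : Fin n → ℝ) (m : ℕ) :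
    MvPolynomial.aeval a (MvPolynomial.psum (Fin n) ℝ m) = ∑ k, a k ^ m := by
  simp [MvPolynomial.psum]

lemma esymm_eq_of_psum_eq {n : ℕ} (a b : Fin n → ℝ)
    (h : ∀ m, 1 ≤ m → m ≤ n → ∑ k, a k ^ m = ∑ k, b k ^ m) :
    ∀ j, j ≤ n → MvPolynomial.aeval a (MvPolynomial.esymm (Fin n) ℝ j)
      = MvPolynomial.aeval b (MvPolynomial.esymm (Fin n) ℝ j) := by
  intro j
  induction j using Nat.strong_induction_on with
  | _ j ih =>
    intro hj
    rcases Nat.eq_zero_or_pos j with h0 | hpos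
    · subst h0; simp
    · have keya := congrArg (MvPolynomial.aeval (R := ℝ) a) (MvPolynomial.mul_esymm_eq_sum (Fin n) ℝ j)
      have keyb := congrArg (MvPolynomial.aeval (R := ℝ) b) (MvPolynomial.mul_esymm_eq_sum (Fin n) ℝ j)
      simp only [map_mul, map_natCast, map_sum, map_pow, map_neg, map_one] at keya keyb
      have hsum : ∑ p ∈ (antidiagonal j).filter (fun p => p.1 < j),
            MvPolynomial.aeval a ((-1 : MvPolynomial (Fin n) ℝ) ^ p.1 * MvPolynomial.esymm (Fin n) ℝ p.1 * MvPolynomial.psum (Fin n) ℝ p.2)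
          = ∑ p ∈ (antidiagonal j).filter (fun p => p.1 < j),
            MvPolynomial.aeval b ((-1 : MvPolynomial (Fin n) ℝ) ^ p.1 * MvPolynomial.esymm (Fin n) ℝ p.1 * MvPolynomial.psum (Fin n) ℝ p.2) := by
        refine Finset.sum_congr rfl ?_
        rintro ⟨i, l⟩ hp
        simp only [Finset.mem_filter, Finset.HasAntidiagonal.mem_antidiagonal] at hp
        obtain ⟨hil, hilt⟩ := hp
        simp only [map_mul, map_pow, map_neg, map_one, aeval_psum]
        rw [ih i hilt (le_trans (le_of_lt hilt) hj),
          h l (by omega) (by omega)]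
      have : (j : ℝ) * MvPolynomial.aeval a (MvPolynomial.esymm (Fin n) ℝ j)
          = (j : ℝ) * MvPolynomial.aeval b (MvPolynomial.esymm (Fin n) ℝ j) := by
        simp only [map_mul, map_pow, map_neg, map_one] at hsum
        rw [keya, keyb, hsum]
      exact mul_left_cancel₀ (by exact_mod_cast hpos.ne') this

lemma multiset_eq_of_psum_eq {n : ℕ} (a b : Fin n → ℝ)
    (h : ∀ m, 1 ≤ m → m ≤ n → ∑ k, a k ^ m = ∑ k, b k ^ m) :
    Finset.univ.val.map a = Finset.univ.val.map b := by
  have hca : Multiset.card (Finset.univ.val.map a) = n := by simp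
  have hcb : Multiset.card (Finset.univ.val.map b) = n := by simp
  have hpoly : ((Finset.univ.val.map a).map fun t => Polynomial.X - Polynomial.C t).prod
      = ((Finset.univ.val.map b).map fun t => Polynomial.X - Polynomial.C t).prod := by
    apply Polynomial.ext
    intro k
    by_cases hk : k ≤ n
    · rw [Multiset.prod_X_sub_C_coeff _ (by rw [hca]; exact hk),
        Multiset.prod_X_sub_C_coeff _ (by rw [hcb]; exact hk), hca, hcb]
      congr 1
      have := esymm_eq_of_psum_eq a b h (n - k) (Nat.sub_le _ _)
      rwa [MvPolynomial.aeval_esymm_eq_multiset_esymm,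
        MvPolynomial.aeval_esymm_eq_multiset_esymm] at this
    · rw [Polynomial.coeff_eq_zero_of_natDegree_lt, Polynomial.coeff_eq_zero_of_natDegree_lt] <;>
        · rw [Polynomial.natDegree_multiset_prod_X_sub_C_eq_card]; simp; omega
  have := congrArg Polynomial.roots hpoly
  rwa [Polynomial.roots_multiset_prod_X_sub_C, Polynomial.roots_multiset_prod_X_sub_C] at this

lemma exists_perm_of_multiset_eq {n : ℕ} {α : Type*} (a b : Fin n → α)
    (h : Finset.univ.val.map a = Finset.univ.val.map b) :
    ∃ σ : Equiv.Perm (Fin n), a = b ∘ σ := by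
  classical
  have hcount : ∀ (c : Fin n → α) (v : α),
      (Finset.univ.filter (fun j => c j = v)).card = Multiset.count v (Finset.univ.val.map c) := by
    intro c v
    rw [Multiset.count_map]
    rw [Finset.card, Finset.filter_val]
    congr 1
    apply Multiset.filter_congr
    intro j _
    exact ⟨fun h => h.symm, fun h => h.symm⟩
  have hcard : ∀ v : α, Fintype.card {j // a j = v} = Fintype.card {j // b j = v} := by
    intro v
    rw [Fintype.card_subtype, Fintype.card_subtype, hcount, hcount, h]
  let e : ∀ v, {j // a j = v} ≃ {j // b j = v} := fun v => Fintype.equivOfCardEq (hcard v)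
  refine ⟨Equiv.ofFiberEquiv e, ?_⟩
  funext j
  exact (Equiv.ofFiberEquiv_map e j).symm

lemma exists_sep_linear {I : ℕ} (S : Finset (Fin I → ℝ)) :
    ∃ t : Fin I → ℝ, ∀ p ∈ S, ∀ q ∈ S, (∑ i, t i * p i) = (∑ i, t i * q i) → p = q := by
  classical
  set P : (Fin I → ℝ) → (Fin I → ℝ) → Polynomial ℝ :=
    fun p q => ∑ i, Polynomial.C (p i - q i) * Polynomial.X ^ (i : ℕ) with hP
  have hPne : ∀ p q : Fin I → ℝ, p ≠ q → P p q ≠ 0 := by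
    intro p q hpq h0
    obtain ⟨i0, hi0⟩ : ∃ i, p i ≠ q i := by
      by_contra hc; push_neg at hc; exact hpq (funext hc)
    have hc0 : (P p q).coeff (i0 : ℕ) = 0 := by rw [h0]; simp
    rw [hP, Polynomial.finset_sum_coeff] at hc0
    simp only [Polynomial.coeff_C_mul, Polynomial.coeff_X_pow] at hc0
    rw [Finset.sum_eq_single i0] at hc0
    · simp at hc0; exact hi0 (by linarith [sub_eq_zero.mp hc0])
    · intro i _ hne
      have : ¬ ((i0 : ℕ) = (i : ℕ)) := fun hh => hne (Fin.ext hh.symm)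
      simp [this]
    · intro habs; exact absurd (Finset.mem_univ i0) habs
  have hfin : (⋃ p ∈ S, ⋃ q ∈ S,
      if p = q then (∅ : Set ℝ) else {c : ℝ | (P p q).IsRoot c}).Finite := by
    apply Set.Finite.biUnion S.finite_toSet; intro p _
    apply Set.Finite.biUnion S.finite_toSet; intro q _
    split
    · exact Set.finite_empty
    · exact Polynomial.finite_setOf_isRoot (hPne p q ‹_›)
  obtain ⟨c, hc⟩ := hfin.infinite_compl.nonempty
  refine ⟨fun i => c ^ (i : ℕ), ?_⟩
  intro p hp q hq heq
  by_contra hpq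
  apply hc
  simp only [Set.mem_iUnion]
  refine ⟨p, hp, q, hq, ?_⟩
  rw [if_neg hpq]
  show (P p q).IsRoot c
  have : (P p q).eval c = ∑ i, (p i - q i) * c ^ (i : ℕ) := by
    rw [hP, Polynomial.eval_finset_sum]; simp
  rw [Polynomial.IsRoot, this]
  have : ∑ i : Fin I, (p i - q i) * c ^ (i : ℕ)
      = (∑ i : Fin I, c ^ (i : ℕ) * p i) - (∑ i : Fin I, c ^ (i : ℕ) * q i) := by
    rw [← Finset.sum_sub_distrib]; congr 1; funext i; ring
  rw [this, heq, sub_self]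


/-- Index set of the multisymmetric power sums of degree 1..J in I variables;
its cardinality is κ(I,J) = binom(J+I,I) - 1. -/
def MIdx (I J : ℕ) := {s : Fin I → ℕ // 1 ≤ ∑ i, s i ∧ ∑ i, s i ≤ J}

/-- The multisymmetric power sum map η_{I,J}. -/
noncomputable def eta (I J : ℕ) (x : Fin I → ℝ) : MIdx I J → ℝ :=
  fun s => ∏ i, x i ^ s.val i

lemma polarize {I J : ℕ} (x y : Fin J → (Fin I → ℝ))
    (H : ∀ s : MIdx I J, ∑ k, eta I J (x k) s = ∑ k, eta I J (y k) s)
    (t : Fin I → ℝ) (m : ℕ) (h1 : 1 ≤ m) (hm : m ≤ J) :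
    ∑ k, (∑ i, t i * x k i) ^ m = ∑ k, (∑ i, t i * y k i) ^ m := by
  classical
  have expand : ∀ z : Fin I → ℝ,
      (∑ i, t i * z i) ^ m = ∑ s ∈ Finset.piAntidiag Finset.univ m,
        (Nat.multinomial Finset.univ s : ℝ) * ((∏ i, t i ^ s i) * (∏ i, z i ^ s i)) := by
    intro z
    rw [Finset.sum_pow_eq_sum_piAntidiag]
    refine Finset.sum_congr rfl fun s hs => ?_
    rw [← Finset.prod_mul_distrib]
    simp_rw [mul_pow]
  have key : ∀ z : Fin J → (Fin I → ℝ),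
      ∑ k, (∑ i, t i * z k i) ^ m
        = ∑ s ∈ Finset.piAntidiag Finset.univ m,
            (Nat.multinomial Finset.univ s : ℝ) * (∏ i, t i ^ s i) * (∑ k, ∏ i, z k i ^ s i) := by
    intro z
    calc ∑ k, (∑ i, t i * z k i) ^ m
        = ∑ k, ∑ s ∈ Finset.piAntidiag Finset.univ m,
            (Nat.multinomial Finset.univ s : ℝ) * ((∏ i, t i ^ s i) * (∏ i, z k i ^ s i)) := by
          exact Finset.sum_congr rfl fun k _ => expand (z k)
      _ = ∑ s ∈ Finset.piAntidiag Finset.univ m, ∑ k,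
            (Nat.multinomial Finset.univ s : ℝ) * ((∏ i, t i ^ s i) * (∏ i, z k i ^ s i)) :=
          Finset.sum_comm
      _ = _ := by
          refine Finset.sum_congr rfl fun s hs => ?_
          simp_rw [← mul_assoc]
          rw [← Finset.mul_sum]
  rw [key x, key y]
  refine Finset.sum_congr rfl fun s hs => ?_
  rw [Finset.mem_piAntidiag] at hs
  have hsum : ∑ i, s i = m := hs.1
  have hmem : 1 ≤ ∑ i, s i ∧ ∑ i, s i ≤ J := ⟨by omega, by omega⟩
  congr 1
  exact H ⟨s, hmem⟩

lemma eta_inj {I J : ℕ} (x y : Fin J → (Fin I → ℝ))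
    (H : ∑ k, eta I J (x k) = ∑ k, eta I J (y k)) :
    ∃ σ : Equiv.Perm (Fin J), x = y ∘ σ := by
  classical
  have H' : ∀ s : MIdx I J, ∑ k, eta I J (x k) s = ∑ k, eta I J (y k) s := by
    intro s
    have := congrFun H s
    simpa using this
  set S : Finset (Fin I → ℝ) := Finset.image x Finset.univ ∪ Finset.image y Finset.univ with hS
  obtain ⟨t, ht⟩ := exists_sep_linear S
  set f : (Fin I → ℝ) → ℝ := fun p => ∑ i, t i * p i with hf
  have hx : ∀ j, x j ∈ S := fun j =>
    Finset.mem_union_left _ (Finset.mem_image_of_mem x (Finset.mem_univ j))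
  have hy : ∀ j, y j ∈ S := fun j =>
    Finset.mem_union_right _ (Finset.mem_image_of_mem y (Finset.mem_univ j))
  have hpow : ∀ m, 1 ≤ m → m ≤ J → ∑ k, (f ∘ x) k ^ m = ∑ k, (f ∘ y) k ^ m :=
    fun m h1 hm => polarize x y H' t m h1 hm
  have hms : Finset.univ.val.map (f ∘ x) = Finset.univ.val.map (f ∘ y) :=
    multiset_eq_of_psum_eq (f ∘ x) (f ∘ y) hpow
  have hcnt : ∀ (z : Fin J → (Fin I → ℝ)), (∀ j, z j ∈ S) → ∀ p ∈ S,
      Multiset.count p (Finset.univ.val.map z)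
        = Multiset.count (f p) (Finset.univ.val.map (f ∘ z)) := by
    intro z hz p hp
    rw [Multiset.count_map, Multiset.count_map]
    congr 1
    apply Multiset.filter_congr
    intro j _
    constructor
    · intro h; exact congrArg f h
    · intro h; exact ht p hp (z j) (hz j) h
  have hmx : Finset.univ.val.map x = Finset.univ.val.map y := by
    apply Multiset.ext.mpr
    intro p
    by_cases hp : p ∈ S
    · rw [hcnt x hx p hp, hcnt y hy p hp, hms]
    · rw [Multiset.count_eq_zero_of_notMem, Multiset.count_eq_zero_of_notMem]
      · intro hmem
        obtain ⟨j, _, hj⟩ := Multiset.mem_map.mp hmem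
        exact hp (hj ▸ hy j)
      · intro hmem
        obtain ⟨j, _, hj⟩ := Multiset.mem_map.mp hmem
        exact hp (hj ▸ hx j)
  exact exists_perm_of_multiset_eq x y hmx

/-- variable-size symmetric representation under
condition (b): zero padding does not change the value of V. -/
theorem stmt_2 (I J : ℕ) (hJ : 0 < J)
    (Ω : Set (Fin I → ℝ)) (hΩc : IsCompact Ω)
    (hΩnn : ∀ x ∈ Ω, ∀ i, 0 ≤ x i)
    (hΩ0 : (0 : Fin I → ℝ) ∈ Ω)
    (V : (J' : ℕ) → (Fin J' → (Fin I → ℝ)) → ℝ)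
    (hVperm : ∀ J', J' ≤ J → ∀ x : Fin J' → (Fin I → ℝ), (∀ j, x j ∈ Ω) →
      ∀ σ : Equiv.Perm (Fin J'), V J' (x ∘ σ) = V J' x)
    (hVcont : ∀ J', J' ≤ J → ContinuousOn (V J') {x | ∀ j, x j ∈ Ω})
    (hVpad : ∀ J' J'', J' ≤ J'' → J'' ≤ J → ∀ x : Fin J' → (Fin I → ℝ),
      (∀ j, x j ∈ Ω) →
      V J'' (fun j => if h : (j : ℕ) < J' then x ⟨j, h⟩ else 0) = V J' x) :
    ∃ ψ : (MIdx I J → ℝ) → ℝ, Continuous ψ ∧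
      ∀ J', J' ≤ J → ∀ x : Fin J' → (Fin I → ℝ), (∀ j, x j ∈ Ω) →
        V J' x = ψ (∑ k, eta I J (x k)) := by
  classical
  set Φ : (Fin J → (Fin I → ℝ)) → (MIdx I J → ℝ) := fun x => ∑ k, eta I J (x k) with hΦ
  have hΦc : Continuous Φ := by
    apply continuous_pi
    intro s
    have : (fun x : Fin J → (Fin I → ℝ) => Φ x s)
        = fun x => ∑ k, ∏ i, x k i ^ s.val i := by
      funext x; simp [hΦ, eta]
    rw [this]
    apply continuous_finset_sum
    intro k _
    apply continuous_finset_prod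
    intro i _
    exact ((continuous_apply i).comp (continuous_apply k)).pow _
  set K : Set (Fin J → (Fin I → ℝ)) := {x | ∀ j, x j ∈ Ω} with hK
  have hKc : IsCompact K := by
    have : K = Set.pi Set.univ (fun _ : Fin J => Ω) := by
      ext x; simp [hK, Set.mem_pi]
    rw [this]; exact isCompact_univ_pi fun _ => hΩc
  have hwd : ∀ x ∈ K, ∀ x' ∈ K, Φ x = Φ x' → V J x = V J x' := by
    intro x hx x' hx' he
    obtain ⟨σ, hσ⟩ := eta_inj x x' he
    rw [hσ]
    exact hVperm J le_rfl x' hx' σ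
  haveI : CompactSpace K := isCompact_iff_compactSpace.mp hKc
  haveI : Countable (MIdx I J) := by unfold MIdx; infer_instance
  set T : Set (MIdx I J → ℝ) := Φ '' K with hT
  have hTc : IsCompact T := hKc.image hΦc
  let π : K → T := fun x => ⟨Φ x, ⟨x, x.2, rfl⟩⟩
  have hπc : Continuous π := Continuous.subtype_mk (hΦc.comp continuous_subtype_val) _
  have hπs : Function.Surjective π := by
    rintro ⟨y, ⟨x, hx, rfl⟩⟩
    exact ⟨⟨x, hx⟩, rfl⟩
  have hq : Topology.IsQuotientMap π := (hπc.isClosedMap).isQuotientMap hπc hπs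
  let ψ₀ : T → ℝ := fun yt => V J (Classical.choose yt.2)
  have hψ₀ : ∀ x : K, ψ₀ (π x) = V J x.1 := by
    intro x
    have hspec := Classical.choose_spec (π x).2
    exact hwd _ hspec.1 _ x.2 hspec.2
  have hψ₀c : Continuous ψ₀ := by
    rw [hq.continuous_iff]
    have : ψ₀ ∘ π = fun x : K => V J x.1 := funext hψ₀
    rw [this]
    exact (hVcont J le_rfl).restrict
  obtain ⟨g, hg⟩ := ContinuousMap.exists_restrict_eq hTc.isClosed (⟨ψ₀, hψ₀c⟩ : C(T, ℝ))
  have hgT : ∀ yt : T, g yt.1 = ψ₀ yt := fun yt =>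
    congrFun (congrArg DFunLike.coe hg) yt
  refine ⟨g, g.continuous, ?_⟩
  intro J' hJ' x hxΩ
  set xp : Fin J → (Fin I → ℝ) := fun j => if h : (j : ℕ) < J' then x ⟨j, h⟩ else 0 with hxp
  have hxpK : xp ∈ K := by
    intro j
    by_cases h : (j : ℕ) < J' <;> simp only [hxp, h, dif_pos, dif_neg, not_false_iff]
    · exact hxΩ _
    · exact hΩ0
  have heta0 : eta I J (0 : Fin I → ℝ) = 0 := by
    funext s
    obtain ⟨i0, hi0⟩ : ∃ i, s.val i ≠ 0 := by
      by_contra hc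
      push_neg at hc
      have h1 := s.2.1
      rw [Finset.sum_eq_zero fun i _ => hc i] at h1
      omega
    show (∏ i, (0 : Fin I → ℝ) i ^ s.val i) = 0
    exact Finset.prod_eq_zero (Finset.mem_univ i0) (by simp [zero_pow hi0])
  have hΦxp : Φ xp = ∑ k, eta I J (x k) := by
    show ∑ k, eta I J (xp k) = ∑ k, eta I J (x k)
    rw [← Finset.sum_subset (Finset.subset_univ (Finset.univ.map (Fin.castLEEmb hJ')))]
    · rw [Finset.sum_map]
      refine Finset.sum_congr rfl fun k _ => ?_
      have hk : ((Fin.castLEEmb hJ' k : Fin J) : ℕ) < J' := k.2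
      simp only [hxp]
      rw [dif_pos hk]
      congr 1
    · intro k _ hk
      have : ¬ ((k : ℕ) < J') := by
        intro hlt
        exact hk (Finset.mem_map.mpr ⟨⟨(k : ℕ), hlt⟩, Finset.mem_univ _, by
          simp [Fin.castLEEmb]⟩)
      simp only [hxp]
      rw [dif_neg this, heta0]
  have hpad : V J xp = V J' x := hVpad J' J hJ' le_rfl x hxΩ
  calc V J' x = V J xp := hpad.symm
    _ = ψ₀ (π ⟨xp, hxpK⟩) := (hψ₀ ⟨xp, hxpK⟩).symm
    _ = g (Φ xp) := (hgT (π ⟨xp, hxpK⟩)).symm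
    _ = g (∑ k, eta I J (x k)) := by rw [hΦxp]
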